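/- Let A, B ∈ ℂ^{n×n} be Hermitian with B positive definite, and let X ∈ ℂ^{n×n} be invertible with X*BX = Iₙ and X*AX = Λ = diag(λ₁,…,λₙ) with all λᵢ real. Let Γ be the circle of center γ ∈ ℂ and radius ρ > 0, and suppose |λᵢ − γ| < ρ for 1 ≤ i ≤ s and |λᵢ − γ| > ρ for s < i ≤ n. Then zB − A is invertible for every z on Γ and (1/(2π√−1)) ∮_Γ (zB − A)^{-1} dz = X_{(:,1:s)} (X_{(:,1:s)})*, where X_{(:,1:s)} denotes the n×s matrix consisting of the first s columns of X. -/

import Mathlib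

open Matrix
open scoped ComplexOrder

private lemma circleInt_sum {ι : Type*} (t : Finset ι) (f : ι → ℂ → ℂ) (c : ℂ) (R : ℝ)
    (h : ∀ k ∈ t, CircleIntegrable (f k) c R) :
    (∮ z in C(c, R), ∑ k ∈ t, f k z) = ∑ k ∈ t, ∮ z in C(c, R), f k z := by
  unfold circleIntegral
  rw [← intervalIntegral.integral_finset_sum (fun k hk => (h k hk).out)]
  apply intervalIntegral.integral_congr
  intro θ _
  simp [Finset.mul_sum]

private lemma circleInt_out {w c : ℂ} {R : ℝ} (hR : 0 ≤ R)
    (hw : R < ‖w - c‖) : (∮ z in C(c, R), (z - w)⁻¹) = 0 := by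
  have hne : ∀ z ∈ Metric.closedBall c R, z ≠ w := by
    intro z hz heq
    subst heq
    rw [Metric.mem_closedBall, Complex.dist_eq] at hz
    exact absurd hw (not_lt.2 hz)
  have hdiff : DifferentiableOn ℂ (fun z => (z - w)⁻¹) (Metric.closedBall c R) := by
    intro z hz
    exact (((differentiableAt_id.sub_const w).inv (sub_ne_zero.2 (hne z hz))).differentiableWithinAt)
  exact Complex.circleIntegral_eq_zero_of_differentiable_on_off_countable hR Set.countable_empty
    hdiff.continuousOn (fun z hz => (hdiff z (Metric.ball_subset_closedBall hz.1)).differentiableAt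
      (Metric.closedBall_mem_nhds_of_mem hz.1))


/-- Let `A, B` be Hermitian with `B` positive definite, `X` invertible
with `X*BX = I`, `X*AX = diag(λ₁,…,λₙ)` real, and let `Γ` be the circle of center `γ`
and radius `ρ > 0` with `|λᵢ − γ| < ρ` for `i ≤ s` and `|λᵢ − γ| > ρ` for `i > s`.
Then `zB − A` is invertible on `Γ` and
`(1/(2π√−1)) ∮_Γ (zB − A)⁻¹ dz = X_{(:,1:s)} (X_{(:,1:s)})*`. -/
theorem stmt_3 (n s : ℕ) (hs : s ≤ n) (A B X : Matrix (Fin n) (Fin n) ℂ)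
    (hA : A.IsHermitian) (hB : B.PosDef) (hX : IsUnit X)
    (lam : Fin n → ℝ)
    (hXB : Xᴴ * B * X = 1)
    (hXA : Xᴴ * A * X = Matrix.diagonal (fun i => (lam i : ℂ)))
    (γ : ℂ) (ρ : ℝ) (hρ : 0 < ρ)
    (hin : ∀ i : Fin n, (i : ℕ) < s → ‖(lam i : ℂ) - γ‖ < ρ)
    (hout : ∀ i : Fin n, s ≤ (i : ℕ) → ρ < ‖(lam i : ℂ) - γ‖) :
    (∀ z : ℂ, ‖z - γ‖ = ρ → IsUnit (z • B - A)) ∧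
    (∀ i j : Fin n,
      (1 / (2 * (Real.pi : ℂ) * Complex.I)) *
          (∮ z in C(γ, ρ), ((z • B - A)⁻¹ i j)) =
        (X.submatrix id (Fin.castLE hs) * (X.submatrix id (Fin.castLE hs))ᴴ) i j) := by
  have hdX : IsUnit X.det := (Matrix.isUnit_iff_isUnit_det X).mp hX
  have hXi : X⁻¹ * X = 1 := Matrix.nonsing_inv_mul X hdX
  have hXi' : X * X⁻¹ = 1 := Matrix.mul_nonsing_inv X hdX
  have hdXH : IsUnit Xᴴ.det := by rw [Matrix.det_conjTranspose]; exact hdX.star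
  have hXHi : Xᴴ⁻¹ * Xᴴ = 1 := Matrix.nonsing_inv_mul Xᴴ hdXH
  have hfact : ∀ z : ℂ, Xᴴ * (z • B - A) * X
      = Matrix.diagonal (fun k => z - (lam k : ℂ)) := by
    intro z
    have h1 : Xᴴ * (z • B - A) * X = z • (Xᴴ * B * X) - Xᴴ * A * X := by
      rw [Matrix.mul_sub, Matrix.sub_mul, Matrix.mul_smul, Matrix.smul_mul]
    rw [h1, hXB, hXA]
    ext i j
    rcases eq_or_ne i j with rfl | h
    · simp [Matrix.one_apply, Matrix.diagonal_apply]
    · simp [Matrix.one_apply, Matrix.diagonal_apply, h]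
  -- nonvanishing on the circle
  have hzne : ∀ z : ℂ, ‖z - γ‖ = ρ → ∀ k : Fin n, z - (lam k : ℂ) ≠ 0 := by
    intro z hz k h0
    have hzl : z = (lam k : ℂ) := sub_eq_zero.mp h0
    rcases lt_or_ge (k : ℕ) s with hk | hk
    · have := hin k hk; rw [← hzl] at this; exact absurd hz (ne_of_lt this)
    · have := hout k hk; rw [← hzl] at this; exact absurd hz (ne_of_gt this)
  have hUnit : ∀ z : ℂ, ‖z - γ‖ = ρ → IsUnit (z • B - A) := by
    intro z hz
    rw [Matrix.isUnit_iff_isUnit_det, isUnit_iff_ne_zero]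
    intro hdet
    have := congrArg Matrix.det (hfact z)
    rw [Matrix.det_mul, Matrix.det_mul, hdet, mul_zero, zero_mul,
      Matrix.det_diagonal] at this
    exact (Finset.prod_ne_zero_iff.mpr fun k _ => hzne z hz k) this.symm
  refine ⟨hUnit, ?_⟩
  -- inverse formula
  have hinv : ∀ z : ℂ, ‖z - γ‖ = ρ →
      (z • B - A)⁻¹ = X * Matrix.diagonal (fun k => (z - (lam k : ℂ))⁻¹) * Xᴴ := by
    intro z hz
    apply Matrix.inv_eq_right_inv
    have h1 : (z • B - A) * X = Xᴴ⁻¹ * Matrix.diagonal (fun k => z - (lam k : ℂ)) := by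
      have := congrArg (fun M => Xᴴ⁻¹ * M) (hfact z)
      simpa [← Matrix.mul_assoc, hXHi] using this
    calc (z • B - A) * (X * Matrix.diagonal (fun k => (z - (lam k : ℂ))⁻¹) * Xᴴ)
        = ((z • B - A) * X) * Matrix.diagonal (fun k => (z - (lam k : ℂ))⁻¹) * Xᴴ := by
          simp [Matrix.mul_assoc]
      _ = Xᴴ⁻¹ * (Matrix.diagonal (fun k => z - (lam k : ℂ)) *
            Matrix.diagonal (fun k => (z - (lam k : ℂ))⁻¹)) * Xᴴ := by
          rw [h1]; simp only [Matrix.mul_assoc]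
      _ = 1 := by
          rw [Matrix.diagonal_mul_diagonal]
          have : (fun k => (z - (lam k : ℂ)) * (z - (lam k : ℂ))⁻¹) = fun _ => (1 : ℂ) := by
            funext k; exact mul_inv_cancel₀ (hzne z hz k)
          rw [this, Matrix.diagonal_one, Matrix.mul_one, hXHi]
  intro i j
  set c : Fin n → ℂ := fun k => X i k * star (X j k) with hc
  have hentry : ∀ z : ℂ, ‖z - γ‖ = ρ →
      (z • B - A)⁻¹ i j = ∑ k : Fin n, c k * (z - (lam k : ℂ))⁻¹ := by
    intro z hz
    rw [hinv z hz, Matrix.mul_apply]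
    simp only [Matrix.mul_diagonal, Matrix.conjTranspose_apply]
    apply Finset.sum_congr rfl
    intro k _
    simp only [hc]
    ring
  have hsphere : ∀ z ∈ Metric.sphere γ ρ, ‖z - γ‖ = ρ := by
    intro z hz; rwa [Metric.mem_sphere, Complex.dist_eq] at hz
  have hnotmem : ∀ k : Fin n, (lam k : ℂ) ∉ Metric.sphere γ ρ := by
    intro k hk
    exact hzne (lam k) (hsphere _ hk) k (sub_self _)
  have hCI : ∀ k : Fin n, CircleIntegrable (fun z => c k * (z - (lam k : ℂ))⁻¹) γ ρ := by
    intro k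
    apply ContinuousOn.circleIntegrable hρ.le
    apply continuousOn_const.mul
    apply ContinuousOn.inv₀ (by fun_prop)
    intro z hz
    exact hzne z (hsphere z hz) k
  have hint : (∮ z in C(γ, ρ), ((z • B - A)⁻¹ i j))
      = ∑ k : Fin n, c k * (∮ z in C(γ, ρ), (z - (lam k : ℂ))⁻¹) := by
    rw [circleIntegral.integral_congr hρ.le
      (fun z hz => hentry z (hsphere z hz)),
      circleInt_sum Finset.univ _ γ ρ (fun k _ => hCI k)]
    exact Finset.sum_congr rfl fun k _ => circleIntegral.integral_const_mul _ _ _ _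
  have hval : ∀ k : Fin n, (∮ z in C(γ, ρ), (z - (lam k : ℂ))⁻¹)
      = if (k : ℕ) < s then 2 * (Real.pi : ℂ) * Complex.I else 0 := by
    intro k
    rcases lt_or_ge (k : ℕ) s with hk | hk
    · rw [if_pos hk]
      exact circleIntegral.integral_sub_inv_of_mem_ball
        (by rw [Metric.mem_ball, Complex.dist_eq]; exact hin k hk)
    · rw [if_neg (not_lt.2 hk)]
      exact circleInt_out hρ.le (hout k hk)
  have h2pi : (2 * (Real.pi : ℂ) * Complex.I) ≠ 0 := by
    simp [Real.pi_ne_zero, Complex.I_ne_zero, Complex.ext_iff]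
  have hRHS : (X.submatrix id (Fin.castLE hs) * (X.submatrix id (Fin.castLE hs))ᴴ) i j
      = ∑ k : Fin s, c (Fin.castLE hs k) := by
    simp [Matrix.mul_apply, Matrix.conjTranspose_apply, hc]
  rw [hRHS]
  have hbij : ∑ k : Fin s, c (Fin.castLE hs k) = ∑ k : Fin n, if (k : ℕ) < s then c k else 0 := by
    rw [← Finset.sum_filter]
    rw [show (Finset.univ.filter (fun k : Fin n => (k : ℕ) < s))
        = Finset.univ.map (Fin.castLEEmb hs) from ?_]
    · exact (Finset.sum_map Finset.univ (Fin.castLEEmb hs) c).symm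
    · ext k
      simp only [Finset.mem_filter, Finset.mem_univ, true_and, Finset.mem_map,
        Fin.castLEEmb, Function.Embedding.coeFn_mk]
      constructor
      · rintro hk
        exact ⟨⟨(k : ℕ), hk⟩, rfl⟩
      · rintro ⟨a, rfl⟩
        exact lt_of_lt_of_le a.isLt le_rfl
  rw [hint, hbij, Finset.mul_sum]
  simp only [hval, mul_ite, mul_zero]
  apply Finset.sum_congr rfl
  intro k _
  split_ifs with h
  · field_simp
  · simp
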